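/- (Reflection symmetry of expansion coefficients, N = 3 case) In the canonical-word expansion Σ_{τ∈S₆} sgn(τ)[[A B_{τ(1)} B_{τ(2)}][B_{τ(3)} B_{τ(4)} B_{τ(5)}] B_{τ(6)}] = Σ_{n=0}^{6} (−1)^n m_n · Σ_{τ∈S₆} sgn(τ) B_{τ(1)}⋯B_{τ(n)} A B_{τ(n+1)}⋯B_{τ(6)}, the integer coefficients satisfy m_n = m_{6−n} for all 0 ≤ n ≤ 6 (concretely (m₀,...,m₆) = (24,36,36,24,36,36,24)). -/
import Mathlib


/-- The Nambu `n`-bracket: signed sum over all permutations of the ordered product. -/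
def nambu {R : Type*} [Ring R] {n : ℕ} (f : Fin n → R) : R :=
  ∑ σ : Equiv.Perm (Fin n), (Equiv.Perm.sign σ : ℤ) • (List.ofFn (f ∘ σ)).prod

/-- The expansion coefficients `(m₀,…,m₆) = (24,36,36,24,36,36,24)`. -/
def mCoef : ℕ → ℤ := fun n => if n = 0 ∨ n = 3 ∨ n = 6 then 24 else 36

namespace RSC

def p0 : Equiv.Perm (Fin 6) := ⟨![0,1,2,3,4,5], ![0,1,2,3,4,5], by decide, by decide⟩
def p1 : Equiv.Perm (Fin 6) := ⟨![0,1,2,4,3,5], ![0,1,2,4,3,5], by decide, by decide⟩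
def p2 : Equiv.Perm (Fin 6) := ⟨![0,1,3,2,4,5], ![0,1,3,2,4,5], by decide, by decide⟩
def p3 : Equiv.Perm (Fin 6) := ⟨![0,1,3,4,2,5], ![0,1,4,2,3,5], by decide, by decide⟩
def p4 : Equiv.Perm (Fin 6) := ⟨![0,1,4,2,3,5], ![0,1,3,4,2,5], by decide, by decide⟩
def p5 : Equiv.Perm (Fin 6) := ⟨![0,1,4,3,2,5], ![0,1,4,3,2,5], by decide, by decide⟩
def p6 : Equiv.Perm (Fin 6) := ⟨![0,1,5,2,3,4], ![0,1,3,4,5,2], by decide, by decide⟩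
def p7 : Equiv.Perm (Fin 6) := ⟨![0,1,5,2,4,3], ![0,1,3,5,4,2], by decide, by decide⟩
def p8 : Equiv.Perm (Fin 6) := ⟨![0,1,5,3,2,4], ![0,1,4,3,5,2], by decide, by decide⟩
def p9 : Equiv.Perm (Fin 6) := ⟨![0,1,5,3,4,2], ![0,1,5,3,4,2], by decide, by decide⟩
def p10 : Equiv.Perm (Fin 6) := ⟨![0,1,5,4,2,3], ![0,1,4,5,3,2], by decide, by decide⟩
def p11 : Equiv.Perm (Fin 6) := ⟨![0,1,5,4,3,2], ![0,1,5,4,3,2], by decide, by decide⟩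
def p12 : Equiv.Perm (Fin 6) := ⟨![1,0,2,3,4,5], ![1,0,2,3,4,5], by decide, by decide⟩
def p13 : Equiv.Perm (Fin 6) := ⟨![1,0,2,4,3,5], ![1,0,2,4,3,5], by decide, by decide⟩
def p14 : Equiv.Perm (Fin 6) := ⟨![1,0,3,2,4,5], ![1,0,3,2,4,5], by decide, by decide⟩
def p15 : Equiv.Perm (Fin 6) := ⟨![1,0,3,4,2,5], ![1,0,4,2,3,5], by decide, by decide⟩
def p16 : Equiv.Perm (Fin 6) := ⟨![1,0,4,2,3,5], ![1,0,3,4,2,5], by decide, by decide⟩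
def p17 : Equiv.Perm (Fin 6) := ⟨![1,0,4,3,2,5], ![1,0,4,3,2,5], by decide, by decide⟩
def p18 : Equiv.Perm (Fin 6) := ⟨![1,0,5,2,3,4], ![1,0,3,4,5,2], by decide, by decide⟩
def p19 : Equiv.Perm (Fin 6) := ⟨![1,0,5,2,4,3], ![1,0,3,5,4,2], by decide, by decide⟩
def p20 : Equiv.Perm (Fin 6) := ⟨![1,0,5,3,2,4], ![1,0,4,3,5,2], by decide, by decide⟩
def p21 : Equiv.Perm (Fin 6) := ⟨![1,0,5,3,4,2], ![1,0,5,3,4,2], by decide, by decide⟩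
def p22 : Equiv.Perm (Fin 6) := ⟨![1,0,5,4,2,3], ![1,0,4,5,3,2], by decide, by decide⟩
def p23 : Equiv.Perm (Fin 6) := ⟨![1,0,5,4,3,2], ![1,0,5,4,3,2], by decide, by decide⟩
def p24 : Equiv.Perm (Fin 6) := ⟨![2,3,4,0,1,5], ![3,4,0,1,2,5], by decide, by decide⟩
def p25 : Equiv.Perm (Fin 6) := ⟨![2,3,4,1,0,5], ![4,3,0,1,2,5], by decide, by decide⟩
def p26 : Equiv.Perm (Fin 6) := ⟨![2,3,4,5,0,1], ![4,5,0,1,2,3], by decide, by decide⟩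
def p27 : Equiv.Perm (Fin 6) := ⟨![2,3,4,5,1,0], ![5,4,0,1,2,3], by decide, by decide⟩
def p28 : Equiv.Perm (Fin 6) := ⟨![2,4,3,0,1,5], ![3,4,0,2,1,5], by decide, by decide⟩
def p29 : Equiv.Perm (Fin 6) := ⟨![2,4,3,1,0,5], ![4,3,0,2,1,5], by decide, by decide⟩
def p30 : Equiv.Perm (Fin 6) := ⟨![2,4,3,5,0,1], ![4,5,0,2,1,3], by decide, by decide⟩
def p31 : Equiv.Perm (Fin 6) := ⟨![2,4,3,5,1,0], ![5,4,0,2,1,3], by decide, by decide⟩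
def p32 : Equiv.Perm (Fin 6) := ⟨![3,2,4,0,1,5], ![3,4,1,0,2,5], by decide, by decide⟩
def p33 : Equiv.Perm (Fin 6) := ⟨![3,2,4,1,0,5], ![4,3,1,0,2,5], by decide, by decide⟩
def p34 : Equiv.Perm (Fin 6) := ⟨![3,2,4,5,0,1], ![4,5,1,0,2,3], by decide, by decide⟩
def p35 : Equiv.Perm (Fin 6) := ⟨![3,2,4,5,1,0], ![5,4,1,0,2,3], by decide, by decide⟩
def p36 : Equiv.Perm (Fin 6) := ⟨![3,4,2,0,1,5], ![3,4,2,0,1,5], by decide, by decide⟩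
def p37 : Equiv.Perm (Fin 6) := ⟨![3,4,2,1,0,5], ![4,3,2,0,1,5], by decide, by decide⟩
def p38 : Equiv.Perm (Fin 6) := ⟨![3,4,2,5,0,1], ![4,5,2,0,1,3], by decide, by decide⟩
def p39 : Equiv.Perm (Fin 6) := ⟨![3,4,2,5,1,0], ![5,4,2,0,1,3], by decide, by decide⟩
def p40 : Equiv.Perm (Fin 6) := ⟨![4,2,3,0,1,5], ![3,4,1,2,0,5], by decide, by decide⟩
def p41 : Equiv.Perm (Fin 6) := ⟨![4,2,3,1,0,5], ![4,3,1,2,0,5], by decide, by decide⟩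
def p42 : Equiv.Perm (Fin 6) := ⟨![4,2,3,5,0,1], ![4,5,1,2,0,3], by decide, by decide⟩
def p43 : Equiv.Perm (Fin 6) := ⟨![4,2,3,5,1,0], ![5,4,1,2,0,3], by decide, by decide⟩
def p44 : Equiv.Perm (Fin 6) := ⟨![4,3,2,0,1,5], ![3,4,2,1,0,5], by decide, by decide⟩
def p45 : Equiv.Perm (Fin 6) := ⟨![4,3,2,1,0,5], ![4,3,2,1,0,5], by decide, by decide⟩
def p46 : Equiv.Perm (Fin 6) := ⟨![4,3,2,5,0,1], ![4,5,2,1,0,3], by decide, by decide⟩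
def p47 : Equiv.Perm (Fin 6) := ⟨![4,3,2,5,1,0], ![5,4,2,1,0,3], by decide, by decide⟩
def p48 : Equiv.Perm (Fin 6) := ⟨![5,0,1,2,3,4], ![1,2,3,4,5,0], by decide, by decide⟩
def p49 : Equiv.Perm (Fin 6) := ⟨![5,0,1,2,4,3], ![1,2,3,5,4,0], by decide, by decide⟩
def p50 : Equiv.Perm (Fin 6) := ⟨![5,0,1,3,2,4], ![1,2,4,3,5,0], by decide, by decide⟩
def p51 : Equiv.Perm (Fin 6) := ⟨![5,0,1,3,4,2], ![1,2,5,3,4,0], by decide, by decide⟩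
def p52 : Equiv.Perm (Fin 6) := ⟨![5,0,1,4,2,3], ![1,2,4,5,3,0], by decide, by decide⟩
def p53 : Equiv.Perm (Fin 6) := ⟨![5,0,1,4,3,2], ![1,2,5,4,3,0], by decide, by decide⟩
def p54 : Equiv.Perm (Fin 6) := ⟨![5,1,0,2,3,4], ![2,1,3,4,5,0], by decide, by decide⟩
def p55 : Equiv.Perm (Fin 6) := ⟨![5,1,0,2,4,3], ![2,1,3,5,4,0], by decide, by decide⟩
def p56 : Equiv.Perm (Fin 6) := ⟨![5,1,0,3,2,4], ![2,1,4,3,5,0], by decide, by decide⟩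
def p57 : Equiv.Perm (Fin 6) := ⟨![5,1,0,3,4,2], ![2,1,5,3,4,0], by decide, by decide⟩
def p58 : Equiv.Perm (Fin 6) := ⟨![5,1,0,4,2,3], ![2,1,4,5,3,0], by decide, by decide⟩
def p59 : Equiv.Perm (Fin 6) := ⟨![5,1,0,4,3,2], ![2,1,5,4,3,0], by decide, by decide⟩
def p60 : Equiv.Perm (Fin 6) := ⟨![5,2,3,4,0,1], ![4,5,1,2,3,0], by decide, by decide⟩
def p61 : Equiv.Perm (Fin 6) := ⟨![5,2,3,4,1,0], ![5,4,1,2,3,0], by decide, by decide⟩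
def p62 : Equiv.Perm (Fin 6) := ⟨![5,2,4,3,0,1], ![4,5,1,3,2,0], by decide, by decide⟩
def p63 : Equiv.Perm (Fin 6) := ⟨![5,2,4,3,1,0], ![5,4,1,3,2,0], by decide, by decide⟩
def p64 : Equiv.Perm (Fin 6) := ⟨![5,3,2,4,0,1], ![4,5,2,1,3,0], by decide, by decide⟩
def p65 : Equiv.Perm (Fin 6) := ⟨![5,3,2,4,1,0], ![5,4,2,1,3,0], by decide, by decide⟩
def p66 : Equiv.Perm (Fin 6) := ⟨![5,3,4,2,0,1], ![4,5,3,1,2,0], by decide, by decide⟩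
def p67 : Equiv.Perm (Fin 6) := ⟨![5,3,4,2,1,0], ![5,4,3,1,2,0], by decide, by decide⟩
def p68 : Equiv.Perm (Fin 6) := ⟨![5,4,2,3,0,1], ![4,5,2,3,1,0], by decide, by decide⟩
def p69 : Equiv.Perm (Fin 6) := ⟨![5,4,2,3,1,0], ![5,4,2,3,1,0], by decide, by decide⟩
def p70 : Equiv.Perm (Fin 6) := ⟨![5,4,3,2,0,1], ![4,5,3,2,1,0], by decide, by decide⟩
def p71 : Equiv.Perm (Fin 6) := ⟨![5,4,3,2,1,0], ![5,4,3,2,1,0], by decide, by decide⟩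

lemma p0_0 : p0 0 = 0 := rfl
lemma p0_1 : p0 1 = 1 := rfl
lemma p0_2 : p0 2 = 2 := rfl
lemma p0_3 : p0 3 = 3 := rfl
lemma p0_4 : p0 4 = 4 := rfl
lemma p0_5 : p0 5 = 5 := rfl
lemma p1_0 : p1 0 = 0 := rfl
lemma p1_1 : p1 1 = 1 := rfl
lemma p1_2 : p1 2 = 2 := rfl
lemma p1_3 : p1 3 = 4 := rfl
lemma p1_4 : p1 4 = 3 := rfl
lemma p1_5 : p1 5 = 5 := rfl
lemma p2_0 : p2 0 = 0 := rfl
lemma p2_1 : p2 1 = 1 := rfl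
lemma p2_2 : p2 2 = 3 := rfl
lemma p2_3 : p2 3 = 2 := rfl
lemma p2_4 : p2 4 = 4 := rfl
lemma p2_5 : p2 5 = 5 := rfl
lemma p3_0 : p3 0 = 0 := rfl
lemma p3_1 : p3 1 = 1 := rfl
lemma p3_2 : p3 2 = 3 := rfl
lemma p3_3 : p3 3 = 4 := rfl
lemma p3_4 : p3 4 = 2 := rfl
lemma p3_5 : p3 5 = 5 := rfl
lemma p4_0 : p4 0 = 0 := rfl
lemma p4_1 : p4 1 = 1 := rfl
lemma p4_2 : p4 2 = 4 := rfl
lemma p4_3 : p4 3 = 2 := rfl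
lemma p4_4 : p4 4 = 3 := rfl
lemma p4_5 : p4 5 = 5 := rfl
lemma p5_0 : p5 0 = 0 := rfl
lemma p5_1 : p5 1 = 1 := rfl
lemma p5_2 : p5 2 = 4 := rfl
lemma p5_3 : p5 3 = 3 := rfl
lemma p5_4 : p5 4 = 2 := rfl
lemma p5_5 : p5 5 = 5 := rfl
lemma p6_0 : p6 0 = 0 := rfl
lemma p6_1 : p6 1 = 1 := rfl
lemma p6_2 : p6 2 = 5 := rfl
lemma p6_3 : p6 3 = 2 := rfl
lemma p6_4 : p6 4 = 3 := rfl
lemma p6_5 : p6 5 = 4 := rfl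
lemma p7_0 : p7 0 = 0 := rfl
lemma p7_1 : p7 1 = 1 := rfl
lemma p7_2 : p7 2 = 5 := rfl
lemma p7_3 : p7 3 = 2 := rfl
lemma p7_4 : p7 4 = 4 := rfl
lemma p7_5 : p7 5 = 3 := rfl
lemma p8_0 : p8 0 = 0 := rfl
lemma p8_1 : p8 1 = 1 := rfl
lemma p8_2 : p8 2 = 5 := rfl
lemma p8_3 : p8 3 = 3 := rfl
lemma p8_4 : p8 4 = 2 := rfl
lemma p8_5 : p8 5 = 4 := rfl
lemma p9_0 : p9 0 = 0 := rfl
lemma p9_1 : p9 1 = 1 := rfl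
lemma p9_2 : p9 2 = 5 := rfl
lemma p9_3 : p9 3 = 3 := rfl
lemma p9_4 : p9 4 = 4 := rfl
lemma p9_5 : p9 5 = 2 := rfl
lemma p10_0 : p10 0 = 0 := rfl
lemma p10_1 : p10 1 = 1 := rfl
lemma p10_2 : p10 2 = 5 := rfl
lemma p10_3 : p10 3 = 4 := rfl
lemma p10_4 : p10 4 = 2 := rfl
lemma p10_5 : p10 5 = 3 := rfl
lemma p11_0 : p11 0 = 0 := rfl
lemma p11_1 : p11 1 = 1 := rfl
lemma p11_2 : p11 2 = 5 := rfl
lemma p11_3 : p11 3 = 4 := rfl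
lemma p11_4 : p11 4 = 3 := rfl
lemma p11_5 : p11 5 = 2 := rfl
lemma p12_0 : p12 0 = 1 := rfl
lemma p12_1 : p12 1 = 0 := rfl
lemma p12_2 : p12 2 = 2 := rfl
lemma p12_3 : p12 3 = 3 := rfl
lemma p12_4 : p12 4 = 4 := rfl
lemma p12_5 : p12 5 = 5 := rfl
lemma p13_0 : p13 0 = 1 := rfl
lemma p13_1 : p13 1 = 0 := rfl
lemma p13_2 : p13 2 = 2 := rfl
lemma p13_3 : p13 3 = 4 := rfl
lemma p13_4 : p13 4 = 3 := rfl
lemma p13_5 : p13 5 = 5 := rfl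
lemma p14_0 : p14 0 = 1 := rfl
lemma p14_1 : p14 1 = 0 := rfl
lemma p14_2 : p14 2 = 3 := rfl
lemma p14_3 : p14 3 = 2 := rfl
lemma p14_4 : p14 4 = 4 := rfl
lemma p14_5 : p14 5 = 5 := rfl
lemma p15_0 : p15 0 = 1 := rfl
lemma p15_1 : p15 1 = 0 := rfl
lemma p15_2 : p15 2 = 3 := rfl
lemma p15_3 : p15 3 = 4 := rfl
lemma p15_4 : p15 4 = 2 := rfl
lemma p15_5 : p15 5 = 5 := rfl
lemma p16_0 : p16 0 = 1 := rfl
lemma p16_1 : p16 1 = 0 := rfl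
lemma p16_2 : p16 2 = 4 := rfl
lemma p16_3 : p16 3 = 2 := rfl
lemma p16_4 : p16 4 = 3 := rfl
lemma p16_5 : p16 5 = 5 := rfl
lemma p17_0 : p17 0 = 1 := rfl
lemma p17_1 : p17 1 = 0 := rfl
lemma p17_2 : p17 2 = 4 := rfl
lemma p17_3 : p17 3 = 3 := rfl
lemma p17_4 : p17 4 = 2 := rfl
lemma p17_5 : p17 5 = 5 := rfl
lemma p18_0 : p18 0 = 1 := rfl
lemma p18_1 : p18 1 = 0 := rfl
lemma p18_2 : p18 2 = 5 := rfl
lemma p18_3 : p18 3 = 2 := rfl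
lemma p18_4 : p18 4 = 3 := rfl
lemma p18_5 : p18 5 = 4 := rfl
lemma p19_0 : p19 0 = 1 := rfl
lemma p19_1 : p19 1 = 0 := rfl
lemma p19_2 : p19 2 = 5 := rfl
lemma p19_3 : p19 3 = 2 := rfl
lemma p19_4 : p19 4 = 4 := rfl
lemma p19_5 : p19 5 = 3 := rfl
lemma p20_0 : p20 0 = 1 := rfl
lemma p20_1 : p20 1 = 0 := rfl
lemma p20_2 : p20 2 = 5 := rfl
lemma p20_3 : p20 3 = 3 := rfl
lemma p20_4 : p20 4 = 2 := rfl
lemma p20_5 : p20 5 = 4 := rfl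
lemma p21_0 : p21 0 = 1 := rfl
lemma p21_1 : p21 1 = 0 := rfl
lemma p21_2 : p21 2 = 5 := rfl
lemma p21_3 : p21 3 = 3 := rfl
lemma p21_4 : p21 4 = 4 := rfl
lemma p21_5 : p21 5 = 2 := rfl
lemma p22_0 : p22 0 = 1 := rfl
lemma p22_1 : p22 1 = 0 := rfl
lemma p22_2 : p22 2 = 5 := rfl
lemma p22_3 : p22 3 = 4 := rfl
lemma p22_4 : p22 4 = 2 := rfl
lemma p22_5 : p22 5 = 3 := rfl
lemma p23_0 : p23 0 = 1 := rfl
lemma p23_1 : p23 1 = 0 := rfl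
lemma p23_2 : p23 2 = 5 := rfl
lemma p23_3 : p23 3 = 4 := rfl
lemma p23_4 : p23 4 = 3 := rfl
lemma p23_5 : p23 5 = 2 := rfl
lemma p24_0 : p24 0 = 2 := rfl
lemma p24_1 : p24 1 = 3 := rfl
lemma p24_2 : p24 2 = 4 := rfl
lemma p24_3 : p24 3 = 0 := rfl
lemma p24_4 : p24 4 = 1 := rfl
lemma p24_5 : p24 5 = 5 := rfl
lemma p25_0 : p25 0 = 2 := rfl
lemma p25_1 : p25 1 = 3 := rfl
lemma p25_2 : p25 2 = 4 := rfl
lemma p25_3 : p25 3 = 1 := rfl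
lemma p25_4 : p25 4 = 0 := rfl
lemma p25_5 : p25 5 = 5 := rfl
lemma p26_0 : p26 0 = 2 := rfl
lemma p26_1 : p26 1 = 3 := rfl
lemma p26_2 : p26 2 = 4 := rfl
lemma p26_3 : p26 3 = 5 := rfl
lemma p26_4 : p26 4 = 0 := rfl
lemma p26_5 : p26 5 = 1 := rfl
lemma p27_0 : p27 0 = 2 := rfl
lemma p27_1 : p27 1 = 3 := rfl
lemma p27_2 : p27 2 = 4 := rfl
lemma p27_3 : p27 3 = 5 := rfl
lemma p27_4 : p27 4 = 1 := rfl
lemma p27_5 : p27 5 = 0 := rfl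
lemma p28_0 : p28 0 = 2 := rfl
lemma p28_1 : p28 1 = 4 := rfl
lemma p28_2 : p28 2 = 3 := rfl
lemma p28_3 : p28 3 = 0 := rfl
lemma p28_4 : p28 4 = 1 := rfl
lemma p28_5 : p28 5 = 5 := rfl
lemma p29_0 : p29 0 = 2 := rfl
lemma p29_1 : p29 1 = 4 := rfl
lemma p29_2 : p29 2 = 3 := rfl
lemma p29_3 : p29 3 = 1 := rfl
lemma p29_4 : p29 4 = 0 := rfl
lemma p29_5 : p29 5 = 5 := rfl
lemma p30_0 : p30 0 = 2 := rfl
lemma p30_1 : p30 1 = 4 := rfl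
lemma p30_2 : p30 2 = 3 := rfl
lemma p30_3 : p30 3 = 5 := rfl
lemma p30_4 : p30 4 = 0 := rfl
lemma p30_5 : p30 5 = 1 := rfl
lemma p31_0 : p31 0 = 2 := rfl
lemma p31_1 : p31 1 = 4 := rfl
lemma p31_2 : p31 2 = 3 := rfl
lemma p31_3 : p31 3 = 5 := rfl
lemma p31_4 : p31 4 = 1 := rfl
lemma p31_5 : p31 5 = 0 := rfl
lemma p32_0 : p32 0 = 3 := rfl
lemma p32_1 : p32 1 = 2 := rfl
lemma p32_2 : p32 2 = 4 := rfl
lemma p32_3 : p32 3 = 0 := rfl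
lemma p32_4 : p32 4 = 1 := rfl
lemma p32_5 : p32 5 = 5 := rfl
lemma p33_0 : p33 0 = 3 := rfl
lemma p33_1 : p33 1 = 2 := rfl
lemma p33_2 : p33 2 = 4 := rfl
lemma p33_3 : p33 3 = 1 := rfl
lemma p33_4 : p33 4 = 0 := rfl
lemma p33_5 : p33 5 = 5 := rfl
lemma p34_0 : p34 0 = 3 := rfl
lemma p34_1 : p34 1 = 2 := rfl
lemma p34_2 : p34 2 = 4 := rfl
lemma p34_3 : p34 3 = 5 := rfl
lemma p34_4 : p34 4 = 0 := rfl
lemma p34_5 : p34 5 = 1 := rfl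
lemma p35_0 : p35 0 = 3 := rfl
lemma p35_1 : p35 1 = 2 := rfl
lemma p35_2 : p35 2 = 4 := rfl
lemma p35_3 : p35 3 = 5 := rfl
lemma p35_4 : p35 4 = 1 := rfl
lemma p35_5 : p35 5 = 0 := rfl
lemma p36_0 : p36 0 = 3 := rfl
lemma p36_1 : p36 1 = 4 := rfl
lemma p36_2 : p36 2 = 2 := rfl
lemma p36_3 : p36 3 = 0 := rfl
lemma p36_4 : p36 4 = 1 := rfl
lemma p36_5 : p36 5 = 5 := rfl
lemma p37_0 : p37 0 = 3 := rfl
lemma p37_1 : p37 1 = 4 := rfl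
lemma p37_2 : p37 2 = 2 := rfl
lemma p37_3 : p37 3 = 1 := rfl
lemma p37_4 : p37 4 = 0 := rfl
lemma p37_5 : p37 5 = 5 := rfl
lemma p38_0 : p38 0 = 3 := rfl
lemma p38_1 : p38 1 = 4 := rfl
lemma p38_2 : p38 2 = 2 := rfl
lemma p38_3 : p38 3 = 5 := rfl
lemma p38_4 : p38 4 = 0 := rfl
lemma p38_5 : p38 5 = 1 := rfl
lemma p39_0 : p39 0 = 3 := rfl
lemma p39_1 : p39 1 = 4 := rfl
lemma p39_2 : p39 2 = 2 := rfl
lemma p39_3 : p39 3 = 5 := rfl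
lemma p39_4 : p39 4 = 1 := rfl
lemma p39_5 : p39 5 = 0 := rfl
lemma p40_0 : p40 0 = 4 := rfl
lemma p40_1 : p40 1 = 2 := rfl
lemma p40_2 : p40 2 = 3 := rfl
lemma p40_3 : p40 3 = 0 := rfl
lemma p40_4 : p40 4 = 1 := rfl
lemma p40_5 : p40 5 = 5 := rfl
lemma p41_0 : p41 0 = 4 := rfl
lemma p41_1 : p41 1 = 2 := rfl
lemma p41_2 : p41 2 = 3 := rfl
lemma p41_3 : p41 3 = 1 := rfl
lemma p41_4 : p41 4 = 0 := rfl
lemma p41_5 : p41 5 = 5 := rfl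
lemma p42_0 : p42 0 = 4 := rfl
lemma p42_1 : p42 1 = 2 := rfl
lemma p42_2 : p42 2 = 3 := rfl
lemma p42_3 : p42 3 = 5 := rfl
lemma p42_4 : p42 4 = 0 := rfl
lemma p42_5 : p42 5 = 1 := rfl
lemma p43_0 : p43 0 = 4 := rfl
lemma p43_1 : p43 1 = 2 := rfl
lemma p43_2 : p43 2 = 3 := rfl
lemma p43_3 : p43 3 = 5 := rfl
lemma p43_4 : p43 4 = 1 := rfl
lemma p43_5 : p43 5 = 0 := rfl
lemma p44_0 : p44 0 = 4 := rfl
lemma p44_1 : p44 1 = 3 := rfl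
lemma p44_2 : p44 2 = 2 := rfl
lemma p44_3 : p44 3 = 0 := rfl
lemma p44_4 : p44 4 = 1 := rfl
lemma p44_5 : p44 5 = 5 := rfl
lemma p45_0 : p45 0 = 4 := rfl
lemma p45_1 : p45 1 = 3 := rfl
lemma p45_2 : p45 2 = 2 := rfl
lemma p45_3 : p45 3 = 1 := rfl
lemma p45_4 : p45 4 = 0 := rfl
lemma p45_5 : p45 5 = 5 := rfl
lemma p46_0 : p46 0 = 4 := rfl
lemma p46_1 : p46 1 = 3 := rfl
lemma p46_2 : p46 2 = 2 := rfl
lemma p46_3 : p46 3 = 5 := rfl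
lemma p46_4 : p46 4 = 0 := rfl
lemma p46_5 : p46 5 = 1 := rfl
lemma p47_0 : p47 0 = 4 := rfl
lemma p47_1 : p47 1 = 3 := rfl
lemma p47_2 : p47 2 = 2 := rfl
lemma p47_3 : p47 3 = 5 := rfl
lemma p47_4 : p47 4 = 1 := rfl
lemma p47_5 : p47 5 = 0 := rfl
lemma p48_0 : p48 0 = 5 := rfl
lemma p48_1 : p48 1 = 0 := rfl
lemma p48_2 : p48 2 = 1 := rfl
lemma p48_3 : p48 3 = 2 := rfl
lemma p48_4 : p48 4 = 3 := rfl
lemma p48_5 : p48 5 = 4 := rfl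
lemma p49_0 : p49 0 = 5 := rfl
lemma p49_1 : p49 1 = 0 := rfl
lemma p49_2 : p49 2 = 1 := rfl
lemma p49_3 : p49 3 = 2 := rfl
lemma p49_4 : p49 4 = 4 := rfl
lemma p49_5 : p49 5 = 3 := rfl
lemma p50_0 : p50 0 = 5 := rfl
lemma p50_1 : p50 1 = 0 := rfl
lemma p50_2 : p50 2 = 1 := rfl
lemma p50_3 : p50 3 = 3 := rfl
lemma p50_4 : p50 4 = 2 := rfl
lemma p50_5 : p50 5 = 4 := rfl
lemma p51_0 : p51 0 = 5 := rfl
lemma p51_1 : p51 1 = 0 := rfl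
lemma p51_2 : p51 2 = 1 := rfl
lemma p51_3 : p51 3 = 3 := rfl
lemma p51_4 : p51 4 = 4 := rfl
lemma p51_5 : p51 5 = 2 := rfl
lemma p52_0 : p52 0 = 5 := rfl
lemma p52_1 : p52 1 = 0 := rfl
lemma p52_2 : p52 2 = 1 := rfl
lemma p52_3 : p52 3 = 4 := rfl
lemma p52_4 : p52 4 = 2 := rfl
lemma p52_5 : p52 5 = 3 := rfl
lemma p53_0 : p53 0 = 5 := rfl
lemma p53_1 : p53 1 = 0 := rfl
lemma p53_2 : p53 2 = 1 := rfl
lemma p53_3 : p53 3 = 4 := rfl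
lemma p53_4 : p53 4 = 3 := rfl
lemma p53_5 : p53 5 = 2 := rfl
lemma p54_0 : p54 0 = 5 := rfl
lemma p54_1 : p54 1 = 1 := rfl
lemma p54_2 : p54 2 = 0 := rfl
lemma p54_3 : p54 3 = 2 := rfl
lemma p54_4 : p54 4 = 3 := rfl
lemma p54_5 : p54 5 = 4 := rfl
lemma p55_0 : p55 0 = 5 := rfl
lemma p55_1 : p55 1 = 1 := rfl
lemma p55_2 : p55 2 = 0 := rfl
lemma p55_3 : p55 3 = 2 := rfl
lemma p55_4 : p55 4 = 4 := rfl
lemma p55_5 : p55 5 = 3 := rfl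
lemma p56_0 : p56 0 = 5 := rfl
lemma p56_1 : p56 1 = 1 := rfl
lemma p56_2 : p56 2 = 0 := rfl
lemma p56_3 : p56 3 = 3 := rfl
lemma p56_4 : p56 4 = 2 := rfl
lemma p56_5 : p56 5 = 4 := rfl
lemma p57_0 : p57 0 = 5 := rfl
lemma p57_1 : p57 1 = 1 := rfl
lemma p57_2 : p57 2 = 0 := rfl
lemma p57_3 : p57 3 = 3 := rfl
lemma p57_4 : p57 4 = 4 := rfl
lemma p57_5 : p57 5 = 2 := rfl
lemma p58_0 : p58 0 = 5 := rfl
lemma p58_1 : p58 1 = 1 := rfl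
lemma p58_2 : p58 2 = 0 := rfl
lemma p58_3 : p58 3 = 4 := rfl
lemma p58_4 : p58 4 = 2 := rfl
lemma p58_5 : p58 5 = 3 := rfl
lemma p59_0 : p59 0 = 5 := rfl
lemma p59_1 : p59 1 = 1 := rfl
lemma p59_2 : p59 2 = 0 := rfl
lemma p59_3 : p59 3 = 4 := rfl
lemma p59_4 : p59 4 = 3 := rfl
lemma p59_5 : p59 5 = 2 := rfl
lemma p60_0 : p60 0 = 5 := rfl
lemma p60_1 : p60 1 = 2 := rfl
lemma p60_2 : p60 2 = 3 := rfl
lemma p60_3 : p60 3 = 4 := rfl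
lemma p60_4 : p60 4 = 0 := rfl
lemma p60_5 : p60 5 = 1 := rfl
lemma p61_0 : p61 0 = 5 := rfl
lemma p61_1 : p61 1 = 2 := rfl
lemma p61_2 : p61 2 = 3 := rfl
lemma p61_3 : p61 3 = 4 := rfl
lemma p61_4 : p61 4 = 1 := rfl
lemma p61_5 : p61 5 = 0 := rfl
lemma p62_0 : p62 0 = 5 := rfl
lemma p62_1 : p62 1 = 2 := rfl
lemma p62_2 : p62 2 = 4 := rfl
lemma p62_3 : p62 3 = 3 := rfl
lemma p62_4 : p62 4 = 0 := rfl
lemma p62_5 : p62 5 = 1 := rfl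
lemma p63_0 : p63 0 = 5 := rfl
lemma p63_1 : p63 1 = 2 := rfl
lemma p63_2 : p63 2 = 4 := rfl
lemma p63_3 : p63 3 = 3 := rfl
lemma p63_4 : p63 4 = 1 := rfl
lemma p63_5 : p63 5 = 0 := rfl
lemma p64_0 : p64 0 = 5 := rfl
lemma p64_1 : p64 1 = 3 := rfl
lemma p64_2 : p64 2 = 2 := rfl
lemma p64_3 : p64 3 = 4 := rfl
lemma p64_4 : p64 4 = 0 := rfl
lemma p64_5 : p64 5 = 1 := rfl
lemma p65_0 : p65 0 = 5 := rfl
lemma p65_1 : p65 1 = 3 := rfl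
lemma p65_2 : p65 2 = 2 := rfl
lemma p65_3 : p65 3 = 4 := rfl
lemma p65_4 : p65 4 = 1 := rfl
lemma p65_5 : p65 5 = 0 := rfl
lemma p66_0 : p66 0 = 5 := rfl
lemma p66_1 : p66 1 = 3 := rfl
lemma p66_2 : p66 2 = 4 := rfl
lemma p66_3 : p66 3 = 2 := rfl
lemma p66_4 : p66 4 = 0 := rfl
lemma p66_5 : p66 5 = 1 := rfl
lemma p67_0 : p67 0 = 5 := rfl
lemma p67_1 : p67 1 = 3 := rfl
lemma p67_2 : p67 2 = 4 := rfl
lemma p67_3 : p67 3 = 2 := rfl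
lemma p67_4 : p67 4 = 1 := rfl
lemma p67_5 : p67 5 = 0 := rfl
lemma p68_0 : p68 0 = 5 := rfl
lemma p68_1 : p68 1 = 4 := rfl
lemma p68_2 : p68 2 = 2 := rfl
lemma p68_3 : p68 3 = 3 := rfl
lemma p68_4 : p68 4 = 0 := rfl
lemma p68_5 : p68 5 = 1 := rfl
lemma p69_0 : p69 0 = 5 := rfl
lemma p69_1 : p69 1 = 4 := rfl
lemma p69_2 : p69 2 = 2 := rfl
lemma p69_3 : p69 3 = 3 := rfl
lemma p69_4 : p69 4 = 1 := rfl
lemma p69_5 : p69 5 = 0 := rfl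
lemma p70_0 : p70 0 = 5 := rfl
lemma p70_1 : p70 1 = 4 := rfl
lemma p70_2 : p70 2 = 3 := rfl
lemma p70_3 : p70 3 = 2 := rfl
lemma p70_4 : p70 4 = 0 := rfl
lemma p70_5 : p70 5 = 1 := rfl
lemma p71_0 : p71 0 = 5 := rfl
lemma p71_1 : p71 1 = 4 := rfl
lemma p71_2 : p71 2 = 3 := rfl
lemma p71_3 : p71 3 = 2 := rfl
lemma p71_4 : p71 4 = 1 := rfl
lemma p71_5 : p71 5 = 0 := rfl
lemma p0_sign : ((Equiv.Perm.sign p0 : ℤˣ) : ℤ) = 1 := by decide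
lemma p1_sign : ((Equiv.Perm.sign p1 : ℤˣ) : ℤ) = -1 := by decide
lemma p2_sign : ((Equiv.Perm.sign p2 : ℤˣ) : ℤ) = -1 := by decide
lemma p3_sign : ((Equiv.Perm.sign p3 : ℤˣ) : ℤ) = 1 := by decide
lemma p4_sign : ((Equiv.Perm.sign p4 : ℤˣ) : ℤ) = 1 := by decide
lemma p5_sign : ((Equiv.Perm.sign p5 : ℤˣ) : ℤ) = -1 := by decide
lemma p6_sign : ((Equiv.Perm.sign p6 : ℤˣ) : ℤ) = -1 := by decide
lemma p7_sign : ((Equiv.Perm.sign p7 : ℤˣ) : ℤ) = 1 := by decide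
lemma p8_sign : ((Equiv.Perm.sign p8 : ℤˣ) : ℤ) = 1 := by decide
lemma p9_sign : ((Equiv.Perm.sign p9 : ℤˣ) : ℤ) = -1 := by decide
lemma p10_sign : ((Equiv.Perm.sign p10 : ℤˣ) : ℤ) = -1 := by decide
lemma p11_sign : ((Equiv.Perm.sign p11 : ℤˣ) : ℤ) = 1 := by decide
lemma p12_sign : ((Equiv.Perm.sign p12 : ℤˣ) : ℤ) = -1 := by decide
lemma p13_sign : ((Equiv.Perm.sign p13 : ℤˣ) : ℤ) = 1 := by decide
lemma p14_sign : ((Equiv.Perm.sign p14 : ℤˣ) : ℤ) = 1 := by decide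
lemma p15_sign : ((Equiv.Perm.sign p15 : ℤˣ) : ℤ) = -1 := by decide
lemma p16_sign : ((Equiv.Perm.sign p16 : ℤˣ) : ℤ) = -1 := by decide
lemma p17_sign : ((Equiv.Perm.sign p17 : ℤˣ) : ℤ) = 1 := by decide
lemma p18_sign : ((Equiv.Perm.sign p18 : ℤˣ) : ℤ) = 1 := by decide
lemma p19_sign : ((Equiv.Perm.sign p19 : ℤˣ) : ℤ) = -1 := by decide
lemma p20_sign : ((Equiv.Perm.sign p20 : ℤˣ) : ℤ) = -1 := by decide
lemma p21_sign : ((Equiv.Perm.sign p21 : ℤˣ) : ℤ) = 1 := by decide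
lemma p22_sign : ((Equiv.Perm.sign p22 : ℤˣ) : ℤ) = 1 := by decide
lemma p23_sign : ((Equiv.Perm.sign p23 : ℤˣ) : ℤ) = -1 := by decide
lemma p24_sign : ((Equiv.Perm.sign p24 : ℤˣ) : ℤ) = 1 := by decide
lemma p25_sign : ((Equiv.Perm.sign p25 : ℤˣ) : ℤ) = -1 := by decide
lemma p26_sign : ((Equiv.Perm.sign p26 : ℤˣ) : ℤ) = 1 := by decide
lemma p27_sign : ((Equiv.Perm.sign p27 : ℤˣ) : ℤ) = -1 := by decide
lemma p28_sign : ((Equiv.Perm.sign p28 : ℤˣ) : ℤ) = -1 := by decide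
lemma p29_sign : ((Equiv.Perm.sign p29 : ℤˣ) : ℤ) = 1 := by decide
lemma p30_sign : ((Equiv.Perm.sign p30 : ℤˣ) : ℤ) = -1 := by decide
lemma p31_sign : ((Equiv.Perm.sign p31 : ℤˣ) : ℤ) = 1 := by decide
lemma p32_sign : ((Equiv.Perm.sign p32 : ℤˣ) : ℤ) = -1 := by decide
lemma p33_sign : ((Equiv.Perm.sign p33 : ℤˣ) : ℤ) = 1 := by decide
lemma p34_sign : ((Equiv.Perm.sign p34 : ℤˣ) : ℤ) = -1 := by decide
lemma p35_sign : ((Equiv.Perm.sign p35 : ℤˣ) : ℤ) = 1 := by decide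
lemma p36_sign : ((Equiv.Perm.sign p36 : ℤˣ) : ℤ) = 1 := by decide
lemma p37_sign : ((Equiv.Perm.sign p37 : ℤˣ) : ℤ) = -1 := by decide
lemma p38_sign : ((Equiv.Perm.sign p38 : ℤˣ) : ℤ) = 1 := by decide
lemma p39_sign : ((Equiv.Perm.sign p39 : ℤˣ) : ℤ) = -1 := by decide
lemma p40_sign : ((Equiv.Perm.sign p40 : ℤˣ) : ℤ) = 1 := by decide
lemma p41_sign : ((Equiv.Perm.sign p41 : ℤˣ) : ℤ) = -1 := by decide
lemma p42_sign : ((Equiv.Perm.sign p42 : ℤˣ) : ℤ) = 1 := by decide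
lemma p43_sign : ((Equiv.Perm.sign p43 : ℤˣ) : ℤ) = -1 := by decide
lemma p44_sign : ((Equiv.Perm.sign p44 : ℤˣ) : ℤ) = -1 := by decide
lemma p45_sign : ((Equiv.Perm.sign p45 : ℤˣ) : ℤ) = 1 := by decide
lemma p46_sign : ((Equiv.Perm.sign p46 : ℤˣ) : ℤ) = -1 := by decide
lemma p47_sign : ((Equiv.Perm.sign p47 : ℤˣ) : ℤ) = 1 := by decide
lemma p48_sign : ((Equiv.Perm.sign p48 : ℤˣ) : ℤ) = -1 := by decide
lemma p49_sign : ((Equiv.Perm.sign p49 : ℤˣ) : ℤ) = 1 := by decide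
lemma p50_sign : ((Equiv.Perm.sign p50 : ℤˣ) : ℤ) = 1 := by decide
lemma p51_sign : ((Equiv.Perm.sign p51 : ℤˣ) : ℤ) = -1 := by decide
lemma p52_sign : ((Equiv.Perm.sign p52 : ℤˣ) : ℤ) = -1 := by decide
lemma p53_sign : ((Equiv.Perm.sign p53 : ℤˣ) : ℤ) = 1 := by decide
lemma p54_sign : ((Equiv.Perm.sign p54 : ℤˣ) : ℤ) = 1 := by decide
lemma p55_sign : ((Equiv.Perm.sign p55 : ℤˣ) : ℤ) = -1 := by decide
lemma p56_sign : ((Equiv.Perm.sign p56 : ℤˣ) : ℤ) = -1 := by decide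
lemma p57_sign : ((Equiv.Perm.sign p57 : ℤˣ) : ℤ) = 1 := by decide
lemma p58_sign : ((Equiv.Perm.sign p58 : ℤˣ) : ℤ) = 1 := by decide
lemma p59_sign : ((Equiv.Perm.sign p59 : ℤˣ) : ℤ) = -1 := by decide
lemma p60_sign : ((Equiv.Perm.sign p60 : ℤˣ) : ℤ) = -1 := by decide
lemma p61_sign : ((Equiv.Perm.sign p61 : ℤˣ) : ℤ) = 1 := by decide
lemma p62_sign : ((Equiv.Perm.sign p62 : ℤˣ) : ℤ) = 1 := by decide
lemma p63_sign : ((Equiv.Perm.sign p63 : ℤˣ) : ℤ) = -1 := by decide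
lemma p64_sign : ((Equiv.Perm.sign p64 : ℤˣ) : ℤ) = 1 := by decide
lemma p65_sign : ((Equiv.Perm.sign p65 : ℤˣ) : ℤ) = -1 := by decide
lemma p66_sign : ((Equiv.Perm.sign p66 : ℤˣ) : ℤ) = -1 := by decide
lemma p67_sign : ((Equiv.Perm.sign p67 : ℤˣ) : ℤ) = 1 := by decide
lemma p68_sign : ((Equiv.Perm.sign p68 : ℤˣ) : ℤ) = -1 := by decide
lemma p69_sign : ((Equiv.Perm.sign p69 : ℤˣ) : ℤ) = 1 := by decide
lemma p70_sign : ((Equiv.Perm.sign p70 : ℤˣ) : ℤ) = 1 := by decide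
lemma p71_sign : ((Equiv.Perm.sign p71 : ℤˣ) : ℤ) = -1 := by decide

variable {R : Type*} [Ring R]

def gword (A : R) (B : Fin 6 → R) (n : ℕ) (τ : Equiv.Perm (Fin 6)) : R :=
  ((List.ofFn (B ∘ τ)).take n).prod * A * ((List.ofFn (B ∘ τ)).drop n).prod

lemma gword_eval_0 (A : R) (B : Fin 6 → R) (π : Equiv.Perm (Fin 6)) :
    gword A B 0 π = 1 * A * (B (π 0) * (B (π 1) * (B (π 2) * (B (π 3) * (B (π 4) * (B (π 5) * (1))))))) := rfl
lemma gword_eval_1 (A : R) (B : Fin 6 → R) (π : Equiv.Perm (Fin 6)) :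
    gword A B 1 π = B (π 0) * (1) * A * (B (π 1) * (B (π 2) * (B (π 3) * (B (π 4) * (B (π 5) * (1)))))) := rfl
lemma gword_eval_2 (A : R) (B : Fin 6 → R) (π : Equiv.Perm (Fin 6)) :
    gword A B 2 π = B (π 0) * (B (π 1) * (1)) * A * (B (π 2) * (B (π 3) * (B (π 4) * (B (π 5) * (1))))) := rfl
lemma gword_eval_3 (A : R) (B : Fin 6 → R) (π : Equiv.Perm (Fin 6)) :
    gword A B 3 π = B (π 0) * (B (π 1) * (B (π 2) * (1))) * A * (B (π 3) * (B (π 4) * (B (π 5) * (1)))) := rfl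
lemma gword_eval_4 (A : R) (B : Fin 6 → R) (π : Equiv.Perm (Fin 6)) :
    gword A B 4 π = B (π 0) * (B (π 1) * (B (π 2) * (B (π 3) * (1)))) * A * (B (π 4) * (B (π 5) * (1))) := rfl
lemma gword_eval_5 (A : R) (B : Fin 6 → R) (π : Equiv.Perm (Fin 6)) :
    gword A B 5 π = B (π 0) * (B (π 1) * (B (π 2) * (B (π 3) * (B (π 4) * (1))))) * A * (B (π 5) * (1)) := rfl
lemma gword_eval_6 (A : R) (B : Fin 6 → R) (π : Equiv.Perm (Fin 6)) :
    gword A B 6 π = B (π 0) * (B (π 1) * (B (π 2) * (B (π 3) * (B (π 4) * (B (π 5) * (1)))))) * A * (1) := rfl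

open Equiv Equiv.Perm in
lemma nambu3 (x y z : R) :
    nambu ![x, y, z] = x*y*z - x*z*y - y*x*z + y*z*x + z*x*y - z*y*x := by
  rw [nambu]
  rw [show (Finset.univ : Finset (Equiv.Perm (Fin 3))) =
       Finset.cons 1 (Finset.cons (Equiv.swap 0 1) (Finset.cons (Equiv.swap 0 2)
        (Finset.cons (Equiv.swap 1 2) (Finset.cons (Equiv.swap 0 1 * Equiv.swap 1 2)
        (Finset.cons (Equiv.swap 0 2 * Equiv.swap 1 2) ∅ (by decide)) (by decide)) (by decide)) (by decide)) (by decide)) (by decide) from by decide]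
  simp only [Finset.sum_cons, Finset.sum_empty, add_zero, List.ofFn_succ, List.ofFn_zero,
    List.prod_cons, List.prod_nil, Function.comp_apply, mul_one,
    show ∀ i : Fin 3, (1 : Equiv.Perm (Fin 3)) i = i from by decide,
    show (Equiv.swap 0 1 : Equiv.Perm (Fin 3)) 0 = 1 from by decide,
    show (Equiv.swap 0 1 : Equiv.Perm (Fin 3)) 1 = 0 from by decide,
    show (Equiv.swap 0 1 : Equiv.Perm (Fin 3)) 2 = 2 from by decide,
    show (Equiv.swap 0 2 : Equiv.Perm (Fin 3)) 0 = 2 from by decide,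
    show (Equiv.swap 0 2 : Equiv.Perm (Fin 3)) 1 = 1 from by decide,
    show (Equiv.swap 0 2 : Equiv.Perm (Fin 3)) 2 = 0 from by decide,
    show (Equiv.swap 1 2 : Equiv.Perm (Fin 3)) 0 = 0 from by decide,
    show (Equiv.swap 1 2 : Equiv.Perm (Fin 3)) 1 = 2 from by decide,
    show (Equiv.swap 1 2 : Equiv.Perm (Fin 3)) 2 = 1 from by decide,
    show (Equiv.swap 0 1 * Equiv.swap 1 2 : Equiv.Perm (Fin 3)) 0 = 1 from by decide,
    show (Equiv.swap 0 1 * Equiv.swap 1 2 : Equiv.Perm (Fin 3)) 1 = 2 from by decide,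
    show (Equiv.swap 0 1 * Equiv.swap 1 2 : Equiv.Perm (Fin 3)) 2 = 0 from by decide,
    show (Equiv.swap 0 2 * Equiv.swap 1 2 : Equiv.Perm (Fin 3)) 0 = 2 from by decide,
    show (Equiv.swap 0 2 * Equiv.swap 1 2 : Equiv.Perm (Fin 3)) 1 = 0 from by decide,
    show (Equiv.swap 0 2 * Equiv.swap 1 2 : Equiv.Perm (Fin 3)) 2 = 1 from by decide,
    show ((Equiv.Perm.sign (1 : Equiv.Perm (Fin 3)) : ℤˣ) : ℤ) = 1 from by decide,
    show ((Equiv.Perm.sign (Equiv.swap 0 1 : Equiv.Perm (Fin 3)) : ℤˣ) : ℤ) = -1 from by decide,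
    show ((Equiv.Perm.sign (Equiv.swap 0 2 : Equiv.Perm (Fin 3)) : ℤˣ) : ℤ) = -1 from by decide,
    show ((Equiv.Perm.sign (Equiv.swap 1 2 : Equiv.Perm (Fin 3)) : ℤˣ) : ℤ) = -1 from by decide,
    show ((Equiv.Perm.sign (Equiv.swap 0 1 * Equiv.swap 1 2 : Equiv.Perm (Fin 3)) : ℤˣ) : ℤ) = 1 from by decide,
    show ((Equiv.Perm.sign (Equiv.swap 0 2 * Equiv.swap 1 2 : Equiv.Perm (Fin 3)) : ℤˣ) : ℤ) = 1 from by decide,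
    show (Fin.succ (0 : Fin 2)) = (1 : Fin 3) from rfl,
    show (Fin.succ (Fin.succ (0 : Fin 1))) = (2 : Fin 3) from rfl,
    show ![x,y,z] 2 = z from rfl,
    Matrix.cons_val_zero, Matrix.cons_val_one, Matrix.head_cons, one_smul, neg_smul]
  noncomm_ring

set_option maxHeartbeats 2000000 in
lemma expandLHS (A : R) (B : Fin 6 → R) (τ : Equiv.Perm (Fin 6)) :
    nambu ![nambu ![A, B (τ 0), B (τ 1)], nambu ![B (τ 2), B (τ 3), B (τ 4)], B (τ 5)] =
      gword A B 0 (τ * p0) +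
      -gword A B 0 (τ * p1) +
      -gword A B 0 (τ * p2) +
      gword A B 0 (τ * p3) +
      gword A B 0 (τ * p4) +
      -gword A B 0 (τ * p5) +
      -gword A B 0 (τ * p12) +
      gword A B 0 (τ * p13) +
      gword A B 0 (τ * p14) +
      -gword A B 0 (τ * p15) +
      -gword A B 0 (τ * p16) +
      gword A B 0 (τ * p17) +
      -gword A B 1 (τ * p0) +
      gword A B 1 (τ * p1) +
      gword A B 1 (τ * p2) +
      -gword A B 1 (τ * p3) +
      -gword A B 1 (τ * p4) +
      gword A B 1 (τ * p5) +
      gword A B 2 (τ * p0) +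
      -gword A B 2 (τ * p1) +
      -gword A B 2 (τ * p2) +
      gword A B 2 (τ * p3) +
      gword A B 2 (τ * p4) +
      -gword A B 2 (τ * p5) +
      gword A B 1 (τ * p12) +
      -gword A B 1 (τ * p13) +
      -gword A B 1 (τ * p14) +
      gword A B 1 (τ * p15) +
      gword A B 1 (τ * p16) +
      -gword A B 1 (τ * p17) +
      -gword A B 2 (τ * p12) +
      gword A B 2 (τ * p13) +
      gword A B 2 (τ * p14) +
      -gword A B 2 (τ * p15) +
      -gword A B 2 (τ * p16) +
      gword A B 2 (τ * p17) +
      -gword A B 0 (τ * p6) +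
      gword A B 0 (τ * p7) +
      gword A B 0 (τ * p8) +
      -gword A B 0 (τ * p9) +
      -gword A B 0 (τ * p10) +
      gword A B 0 (τ * p11) +
      gword A B 0 (τ * p18) +
      -gword A B 0 (τ * p19) +
      -gword A B 0 (τ * p20) +
      gword A B 0 (τ * p21) +
      gword A B 0 (τ * p22) +
      -gword A B 0 (τ * p23) +
      gword A B 1 (τ * p6) +
      -gword A B 1 (τ * p7) +
      -gword A B 1 (τ * p8) +
      gword A B 1 (τ * p9) +
      gword A B 1 (τ * p10) +
      -gword A B 1 (τ * p11) +
      -gword A B 2 (τ * p6) +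
      gword A B 2 (τ * p7) +
      gword A B 2 (τ * p8) +
      -gword A B 2 (τ * p9) +
      -gword A B 2 (τ * p10) +
      gword A B 2 (τ * p11) +
      -gword A B 1 (τ * p18) +
      gword A B 1 (τ * p19) +
      gword A B 1 (τ * p20) +
      -gword A B 1 (τ * p21) +
      -gword A B 1 (τ * p22) +
      gword A B 1 (τ * p23) +
      gword A B 2 (τ * p18) +
      -gword A B 2 (τ * p19) +
      -gword A B 2 (τ * p20) +
      gword A B 2 (τ * p21) +
      gword A B 2 (τ * p22) +
      -gword A B 2 (τ * p23) +
      -gword A B 3 (τ * p24) +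
      gword A B 3 (τ * p28) +
      gword A B 3 (τ * p32) +
      -gword A B 3 (τ * p36) +
      -gword A B 3 (τ * p40) +
      gword A B 3 (τ * p44) +
      gword A B 3 (τ * p25) +
      -gword A B 3 (τ * p29) +
      -gword A B 3 (τ * p33) +
      gword A B 3 (τ * p37) +
      gword A B 3 (τ * p41) +
      -gword A B 3 (τ * p45) +
      gword A B 4 (τ * p24) +
      -gword A B 4 (τ * p28) +
      -gword A B 4 (τ * p32) +
      gword A B 4 (τ * p36) +
      gword A B 4 (τ * p40) +
      -gword A B 4 (τ * p44) +
      -gword A B 5 (τ * p24) +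
      gword A B 5 (τ * p28) +
      gword A B 5 (τ * p32) +
      -gword A B 5 (τ * p36) +
      -gword A B 5 (τ * p40) +
      gword A B 5 (τ * p44) +
      -gword A B 4 (τ * p25) +
      gword A B 4 (τ * p29) +
      gword A B 4 (τ * p33) +
      -gword A B 4 (τ * p37) +
      -gword A B 4 (τ * p41) +
      gword A B 4 (τ * p45) +
      gword A B 5 (τ * p25) +
      -gword A B 5 (τ * p29) +
      -gword A B 5 (τ * p33) +
      gword A B 5 (τ * p37) +
      gword A B 5 (τ * p41) +
      -gword A B 5 (τ * p45) +
      gword A B 4 (τ * p26) +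
      -gword A B 4 (τ * p30) +
      -gword A B 4 (τ * p34) +
      gword A B 4 (τ * p38) +
      gword A B 4 (τ * p42) +
      -gword A B 4 (τ * p46) +
      -gword A B 4 (τ * p27) +
      gword A B 4 (τ * p31) +
      gword A B 4 (τ * p35) +
      -gword A B 4 (τ * p39) +
      -gword A B 4 (τ * p43) +
      gword A B 4 (τ * p47) +
      -gword A B 5 (τ * p26) +
      gword A B 5 (τ * p30) +
      gword A B 5 (τ * p34) +
      -gword A B 5 (τ * p38) +
      -gword A B 5 (τ * p42) +
      gword A B 5 (τ * p46) +
      gword A B 6 (τ * p26) +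
      -gword A B 6 (τ * p30) +
      -gword A B 6 (τ * p34) +
      gword A B 6 (τ * p38) +
      gword A B 6 (τ * p42) +
      -gword A B 6 (τ * p46) +
      gword A B 5 (τ * p27) +
      -gword A B 5 (τ * p31) +
      -gword A B 5 (τ * p35) +
      gword A B 5 (τ * p39) +
      gword A B 5 (τ * p43) +
      -gword A B 5 (τ * p47) +
      -gword A B 6 (τ * p27) +
      gword A B 6 (τ * p31) +
      gword A B 6 (τ * p35) +
      -gword A B 6 (τ * p39) +
      -gword A B 6 (τ * p43) +
      gword A B 6 (τ * p47) +
      gword A B 1 (τ * p48) +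
      -gword A B 1 (τ * p49) +
      -gword A B 1 (τ * p50) +
      gword A B 1 (τ * p51) +
      gword A B 1 (τ * p52) +
      -gword A B 1 (τ * p53) +
      -gword A B 1 (τ * p54) +
      gword A B 1 (τ * p55) +
      gword A B 1 (τ * p56) +
      -gword A B 1 (τ * p57) +
      -gword A B 1 (τ * p58) +
      gword A B 1 (τ * p59) +
      -gword A B 2 (τ * p48) +
      gword A B 2 (τ * p49) +
      gword A B 2 (τ * p50) +
      -gword A B 2 (τ * p51) +
      -gword A B 2 (τ * p52) +
      gword A B 2 (τ * p53) +
      gword A B 3 (τ * p48) +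
      -gword A B 3 (τ * p49) +
      -gword A B 3 (τ * p50) +
      gword A B 3 (τ * p51) +
      gword A B 3 (τ * p52) +
      -gword A B 3 (τ * p53) +
      gword A B 2 (τ * p54) +
      -gword A B 2 (τ * p55) +
      -gword A B 2 (τ * p56) +
      gword A B 2 (τ * p57) +
      gword A B 2 (τ * p58) +
      -gword A B 2 (τ * p59) +
      -gword A B 3 (τ * p54) +
      gword A B 3 (τ * p55) +
      gword A B 3 (τ * p56) +
      -gword A B 3 (τ * p57) +
      -gword A B 3 (τ * p58) +
      gword A B 3 (τ * p59) +
      -gword A B 4 (τ * p60) +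
      gword A B 4 (τ * p62) +
      gword A B 4 (τ * p64) +
      -gword A B 4 (τ * p66) +
      -gword A B 4 (τ * p68) +
      gword A B 4 (τ * p70) +
      gword A B 4 (τ * p61) +
      -gword A B 4 (τ * p63) +
      -gword A B 4 (τ * p65) +
      gword A B 4 (τ * p67) +
      gword A B 4 (τ * p69) +
      -gword A B 4 (τ * p71) +
      gword A B 5 (τ * p60) +
      -gword A B 5 (τ * p62) +
      -gword A B 5 (τ * p64) +
      gword A B 5 (τ * p66) +
      gword A B 5 (τ * p68) +
      -gword A B 5 (τ * p70) +
      -gword A B 6 (τ * p60) +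
      gword A B 6 (τ * p62) +
      gword A B 6 (τ * p64) +
      -gword A B 6 (τ * p66) +
      -gword A B 6 (τ * p68) +
      gword A B 6 (τ * p70) +
      -gword A B 5 (τ * p61) +
      gword A B 5 (τ * p63) +
      gword A B 5 (τ * p65) +
      -gword A B 5 (τ * p67) +
      -gword A B 5 (τ * p69) +
      gword A B 5 (τ * p71) +
      gword A B 6 (τ * p61) +
      -gword A B 6 (τ * p63) +
      -gword A B 6 (τ * p65) +
      gword A B 6 (τ * p67) +
      gword A B 6 (τ * p69) +
      -gword A B 6 (τ * p71) := by
  simp only [nambu3, gword_eval_0, gword_eval_1, gword_eval_2, gword_eval_3, gword_eval_4,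
    gword_eval_5, gword_eval_6, Equiv.Perm.mul_apply,
    p0_0, p0_1, p0_2, p0_3, p0_4, p0_5, p1_0, p1_1, p1_2, p1_3, p1_4, p1_5, p2_0, p2_1, p2_2, p2_3, p2_4, p2_5, p3_0, p3_1, p3_2, p3_3, p3_4, p3_5, p4_0, p4_1, p4_2, p4_3, p4_4, p4_5, p5_0, p5_1, p5_2, p5_3, p5_4, p5_5, p6_0, p6_1, p6_2, p6_3, p6_4, p6_5, p7_0, p7_1, p7_2, p7_3, p7_4, p7_5, p8_0, p8_1, p8_2, p8_3, p8_4, p8_5, p9_0, p9_1, p9_2, p9_3, p9_4, p9_5, p10_0, p10_1, p10_2, p10_3, p10_4, p10_5, p11_0, p11_1, p11_2, p11_3, p11_4, p11_5, p12_0, p12_1, p12_2, p12_3, p12_4, p12_5, p13_0, p13_1, p13_2, p13_3, p13_4, p13_5, p14_0, p14_1, p14_2, p14_3, p14_4, p14_5, p15_0, p15_1, p15_2, p15_3, p15_4, p15_5, p16_0, p16_1, p16_2, p16_3, p16_4, p16_5, p17_0, p17_1, p17_2, p17_3, p17_4, p17_5, p18_0, p18_1, p18_2, p18_3, p18_4,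 p18_5, p19_0, p19_1, p19_2, p19_3, p19_4, p19_5, p20_0, p20_1, p20_2, p20_3, p20_4, p20_5, p21_0, p21_1, p21_2, p21_3, p21_4, p21_5, p22_0, p22_1, p22_2, p22_3, p22_4, p22_5, p23_0, p23_1, p23_2, p23_3, p23_4, p23_5, p24_0, p24_1, p24_2, p24_3, p24_4, p24_5, p25_0, p25_1, p25_2, p25_3, p25_4, p25_5, p26_0, p26_1, p26_2, p26_3, p26_4, p26_5, p27_0, p27_1, p27_2, p27_3, p27_4, p27_5, p28_0, p28_1, p28_2, p28_3, p28_4, p28_5, p29_0, p29_1, p29_2, p29_3, p29_4, p29_5, p30_0, p30_1, p30_2, p30_3, p30_4, p30_5, p31_0, p31_1, p31_2, p31_3, p31_4, p31_5, p32_0, p32_1, p32_2, p32_3, p32_4, p32_5, p33_0, p33_1, p33_2, p33_3, p33_4, p33_5, p34_0, p34_1, p34_2, p34_3, p34_4, p34_5, p35_0, p35_1, p35_2, p35_3, p35_4, p35_5, p36_0, p36_1, p36_2, p36_3, p36_4, p36_5, p37_0, p37_1, p37_2, p37_3, p37_4, p37_5, p38_0, p38_1, p38_2, p38_3, p38_4,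 p38_5, p39_0, p39_1, p39_2, p39_3, p39_4, p39_5, p40_0, p40_1, p40_2, p40_3, p40_4, p40_5, p41_0, p41_1, p41_2, p41_3, p41_4, p41_5, p42_0, p42_1, p42_2, p42_3, p42_4, p42_5, p43_0, p43_1, p43_2, p43_3, p43_4, p43_5, p44_0, p44_1, p44_2, p44_3, p44_4, p44_5, p45_0, p45_1, p45_2, p45_3, p45_4, p45_5, p46_0, p46_1, p46_2, p46_3, p46_4, p46_5, p47_0, p47_1, p47_2, p47_3, p47_4, p47_5, p48_0, p48_1, p48_2, p48_3, p48_4, p48_5, p49_0, p49_1, p49_2, p49_3, p49_4, p49_5, p50_0, p50_1, p50_2, p50_3, p50_4, p50_5, p51_0, p51_1, p51_2, p51_3, p51_4, p51_5, p52_0, p52_1, p52_2, p52_3, p52_4, p52_5, p53_0, p53_1, p53_2, p53_3, p53_4, p53_5, p54_0, p54_1, p54_2, p54_3, p54_4, p54_5, p55_0, p55_1, p55_2, p55_3, p55_4, p55_5, p56_0, p56_1, p56_2, p56_3, p56_4, p56_5, p57_0, p57_1, p57_2, p57_3, p57_4, p57_5, p58_0, p58_1, p58_2, p58_3, p58_4,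 p58_5, p59_0, p59_1, p59_2, p59_3, p59_4, p59_5, p60_0, p60_1, p60_2, p60_3, p60_4, p60_5, p61_0, p61_1, p61_2, p61_3, p61_4, p61_5, p62_0, p62_1, p62_2, p62_3, p62_4, p62_5, p63_0, p63_1, p63_2, p63_3, p63_4, p63_5, p64_0, p64_1, p64_2, p64_3, p64_4, p64_5, p65_0, p65_1, p65_2, p65_3, p65_4, p65_5, p66_0, p66_1, p66_2, p66_3, p66_4, p66_5, p67_0, p67_1, p67_2, p67_3, p67_4, p67_5, p68_0, p68_1, p68_2, p68_3, p68_4, p68_5, p69_0, p69_1, p69_2, p69_3, p69_4, p69_5, p70_0, p70_1, p70_2, p70_3, p70_4, p70_5, p71_0, p71_1, p71_2, p71_3, p71_4, p71_5]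
  noncomm_ring

def Ssum (A : R) (B : Fin 6 → R) (n : ℕ) : R :=
  ∑ τ : Equiv.Perm (Fin 6), (Equiv.Perm.sign τ : ℤ) • gword A B n τ

lemma reindex (A : R) (B : Fin 6 → R) (n : ℕ) (π : Equiv.Perm (Fin 6)) :
    ∑ τ : Equiv.Perm (Fin 6), (Equiv.Perm.sign τ : ℤ) • gword A B n (τ * π) =
      ((Equiv.Perm.sign π : ℤˣ) : ℤ) • Ssum A B n := by
  rw [Ssum, Finset.smul_sum]
  refine Fintype.sum_equiv (Equiv.mulRight π) _ _ (fun τ => ?_)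
  rw [Equiv.coe_mulRight, Equiv.Perm.sign_mul, smul_smul, Units.val_mul,
    mul_comm ((Equiv.Perm.sign τ : ℤˣ) : ℤ) ((Equiv.Perm.sign π : ℤˣ) : ℤ), ← mul_assoc,
    ← Units.val_mul, Int.units_mul_self, Units.val_one, one_mul]

end RSC

open RSC in
set_option maxHeartbeats 4000000 in
set_option maxRecDepth 4000 in
theorem reflection_symmetry_coefficients {R : Type*} [Ring R] (A : R) (B : Fin 6 → R) :
    (∑ τ : Equiv.Perm (Fin 6), (Equiv.Perm.sign τ : ℤ) •
        nambu ![nambu ![A, B (τ 0), B (τ 1)], nambu ![B (τ 2), B (τ 3), B (τ 4)], B (τ 5)] =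
      ∑ n ∈ Finset.range 7, ((-1 : ℤ) ^ n * mCoef n) •
        ∑ τ : Equiv.Perm (Fin 6), (Equiv.Perm.sign τ : ℤ) •
          (((List.ofFn (B ∘ τ)).take n).prod * A * ((List.ofFn (B ∘ τ)).drop n).prod)) ∧
    ∀ n ≤ 6, mCoef n = mCoef (6 - n) := by
  refine ⟨?_, by intro n hn; interval_cases n <;> rfl⟩
  have hR : (∑ n ∈ Finset.range 7, ((-1 : ℤ) ^ n * mCoef n) •
        ∑ τ : Equiv.Perm (Fin 6), (Equiv.Perm.sign τ : ℤ) •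
          (((List.ofFn (B ∘ τ)).take n).prod * A * ((List.ofFn (B ∘ τ)).drop n).prod)) =
      ∑ n ∈ Finset.range 7, ((-1 : ℤ) ^ n * mCoef n) • Ssum A B n := rfl
  rw [hR]
  simp (config := { maxSteps := 10000000 }) only [expandLHS, smul_add, smul_neg, Finset.sum_add_distrib, Finset.sum_neg_distrib,
    reindex, p0_sign, p1_sign, p2_sign, p3_sign, p4_sign, p5_sign, p6_sign, p7_sign, p8_sign, p9_sign, p10_sign, p11_sign, p12_sign, p13_sign, p14_sign, p15_sign, p16_sign, p17_sign, p18_sign, p19_sign, p20_sign, p21_sign, p22_sign, p23_sign, p24_sign, p25_sign, p26_sign, p27_sign, p28_sign, p29_sign, p30_sign, p31_sign, p32_sign, p33_sign, p34_sign, p35_sign, p36_sign, p37_sign, p38_sign, p39_sign, p40_sign, p41_sign, p42_sign, p43_sign, p44_sign, p45_sign, p46_sign, p47_sign, p48_sign, p49_sign, p50_sign, p51_sign, p52_sign, p53_sign, p54_sign, p55_sign, p56_sign, p57_sign, p58_sign, p59_sign, p60_sign, p61_sign, p62_sign, p63_sign, p64_sign, p65_sign, p66_sign, p67_sign, p68_sign,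 p69_sign, p70_sign, p71_sign,
    one_smul, neg_smul, neg_neg]
  rw [Finset.sum_range_succ, Finset.sum_range_succ, Finset.sum_range_succ,
    Finset.sum_range_succ, Finset.sum_range_succ, Finset.sum_range_succ,
    Finset.sum_range_succ, Finset.sum_range_zero]
  simp only [show ((-1 : ℤ) ^ 0 * mCoef 0) = 24 from by norm_num [mCoef],
    show ((-1 : ℤ) ^ 1 * mCoef 1) = -36 from by norm_num [mCoef],
    show ((-1 : ℤ) ^ 2 * mCoef 2) = 36 from by norm_num [mCoef],
    show ((-1 : ℤ) ^ 3 * mCoef 3) = -24 from by norm_num [mCoef],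
    show ((-1 : ℤ) ^ 4 * mCoef 4) = 36 from by norm_num [mCoef],
    show ((-1 : ℤ) ^ 5 * mCoef 5) = -36 from by norm_num [mCoef],
    show ((-1 : ℤ) ^ 6 * mCoef 6) = 24 from by norm_num [mCoef]]
  abel
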